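/- arXiv:1105.4156 — 5 statements merged into one kernel-verified Lean document; each statement's English description precedes it below -/
import Mathlib

section
/- Let α₁, …, αₙ be distinct complex numbers and T the n × n matrix with T_{ij} = -∏_{k ≠ i, k ≠ j}(α_i - α_k) for i ≠ j and T_{ii} = ∑_{j ≠ i} ∏_{k ≠ i, k ≠ j}(α_i - α_k). Then the rank of T is exactly n - 1. -/
open Finset Polynomial Matrix

private lemma sdiff_pair {n : ℕ} (i j : Fin n) :
    (univ \ {i, j} : Finset (Fin n)) = (univ.erase i).erase j := by
  ext k
  simp only [mem_sdiff, mem_univ, true_and, mem_insert, mem_singleton, mem_erase]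
  tauto

private lemma kernel_const {n : ℕ} (hn : 0 < n) (α : Fin n → ℂ) (hα : Function.Injective α)
    (v : Fin n → ℂ)
    (hv : ∀ i : Fin n, ∑ j ∈ univ.erase i,
      (∏ k ∈ univ \ {i, j}, (α i - α k)) * (v i - v j) = 0) :
    ∃ c : ℂ, ∀ i, v i = c := by
  classical
  have hinj : Set.InjOn α (univ : Finset (Fin n)) := fun x _ y _ h => hα h
  have hcard : #(univ : Finset (Fin n)) = n := by simp
  -- rewrite the hypothesis in terms of nodal polynomials
  have hv' : ∀ i : Fin n, ∑ j ∈ univ.erase i,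
      eval (α i) (Lagrange.nodal ((univ.erase i).erase j) α) * (v i - v j) = 0 := by
    intro i
    rw [← hv i]
    refine sum_congr rfl fun j hj => ?_
    rw [Lagrange.eval_nodal, sdiff_pair]
  set f : ℂ[X] := Lagrange.nodal univ α with hfdef
  have hf : f.Monic := Lagrange.nodal_monic
  have hfnd : f.natDegree = n := by rw [hfdef, Lagrange.natDegree_nodal, hcard]
  have hfd : f.degree = (n : ℕ) := by rw [hfdef, Lagrange.degree_nodal, hcard]
  set d : Fin n → ℂ := fun i => eval (α i) (Lagrange.nodal (univ.erase i) α) with hd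
  have hd0 : ∀ i, d i ≠ 0 := by
    intro i
    rw [hd]
    simp only [Lagrange.eval_nodal]
    refine prod_ne_zero_iff.mpr fun k hk => ?_
    rw [sub_ne_zero]
    exact fun h => (mem_erase.mp hk).1 (hα h).symm
  set Tii : Fin n → ℂ := fun i => ∑ j ∈ univ.erase i,
      eval (α i) (Lagrange.nodal ((univ.erase i).erase j) α) with hT
  have hfz : ∀ i, eval (α i) f = 0 := fun i => Lagrange.eval_nodal_at_node (mem_univ i)
  have hf'c : ∀ i, eval (α i) (derivative f) = d i := fun i =>
    Lagrange.eval_nodal_derivative_eval_node_eq (mem_univ i)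
  -- second derivative at nodes
  have hf'' : ∀ i, eval (α i) (derivative (derivative f)) = 2 * Tii i := by
    intro i
    have h2 : derivative (derivative f) =
        ∑ j ∈ univ, ∑ l ∈ univ.erase j, Lagrange.nodal ((univ.erase j).erase l) α := by
      rw [hfdef, Lagrange.derivative_nodal, map_sum]
      exact Finset.sum_congr rfl fun j _ => Lagrange.derivative_nodal
    rw [h2, eval_finset_sum, ← Finset.add_sum_erase _ _ (mem_univ i)]
    have h3 : ∑ j ∈ univ.erase i,
        eval (α i) (∑ l ∈ univ.erase j, Lagrange.nodal ((univ.erase j).erase l) α)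
        = Tii i := by
      refine Finset.sum_congr rfl fun j hj => ?_
      have hji : j ≠ i := (mem_erase.mp hj).1
      rw [eval_finset_sum, Finset.sum_eq_single_of_mem i
        (mem_erase.mpr ⟨Ne.symm hji, mem_univ i⟩)]
      · rw [Finset.erase_right_comm]
      · intro l hl hli
        exact Lagrange.eval_nodal_at_node (mem_erase.mpr ⟨Ne.symm hli,
          mem_erase.mpr ⟨Ne.symm hji, mem_univ i⟩⟩)
    rw [eval_finset_sum, h3, hT]
    ring
  -- the explicit polynomial W
  set W : ℂ[X] := ∑ j ∈ univ, C (v j) * Lagrange.nodal (univ.erase j) α with hW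
  have hWeval : ∀ i, eval (α i) W = v i * d i := by
    intro i
    rw [hW, eval_finset_sum, Finset.sum_eq_single_of_mem i (mem_univ i)]
    · rw [eval_mul, eval_C, hd]
    · intro j _ hji
      rw [eval_mul, Lagrange.eval_nodal_at_node (mem_erase.mpr ⟨Ne.symm hji, mem_univ i⟩),
        mul_zero]
  have hWdeg : W.degree < (n : WithBot ℕ) := by
    rw [hW]
    refine lt_of_le_of_lt (degree_sum_le _ _) ?_
    rw [Finset.sup_lt_iff (by exact_mod_cast WithBot.bot_lt_coe n)]
    intro j _
    have hle : (C (v j) * Lagrange.nodal (univ.erase j) α).degree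
        ≤ (Lagrange.nodal (univ.erase j) α).degree := by
      rw [← smul_eq_C_mul]
      exact degree_smul_le _ _
    refine lt_of_le_of_lt hle ?_
    rw [Lagrange.degree_nodal, card_erase_of_mem (mem_univ j), hcard]
    exact_mod_cast (by omega : n - 1 < n)
  -- derivative of W at nodes, using the kernel hypothesis
  have hW' : ∀ i, eval (α i) (derivative W) = v i * (2 * Tii i) := by
    intro i
    have hdW : derivative W = ∑ j ∈ univ, C (v j) *
        ∑ l ∈ univ.erase j, Lagrange.nodal ((univ.erase j).erase l) α := by
      rw [hW, map_sum]
      refine sum_congr rfl fun j _ => ?_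
      rw [derivative_mul, derivative_C, zero_mul, zero_add, Lagrange.derivative_nodal]
    rw [hdW, eval_finset_sum, ← Finset.add_sum_erase _ _ (mem_univ i)]
    have h1 : eval (α i) (C (v i) * ∑ l ∈ univ.erase i,
        Lagrange.nodal ((univ.erase i).erase l) α) = v i * Tii i := by
      rw [eval_mul, eval_C, eval_finset_sum, hT]
    have h2 : ∑ j ∈ univ.erase i, eval (α i) (C (v j) * ∑ l ∈ univ.erase j,
          Lagrange.nodal ((univ.erase j).erase l) α)
        = ∑ j ∈ univ.erase i,
          v j * eval (α i) (Lagrange.nodal ((univ.erase i).erase j) α) := by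
      refine sum_congr rfl fun j hj => ?_
      have hji : j ≠ i := (mem_erase.mp hj).1
      rw [eval_mul, eval_C, eval_finset_sum, Finset.sum_eq_single_of_mem i
        (mem_erase.mpr ⟨Ne.symm hji, mem_univ i⟩)]
      · rw [Finset.erase_right_comm]
      · intro l hl hli
        exact Lagrange.eval_nodal_at_node (mem_erase.mpr ⟨Ne.symm hli,
          mem_erase.mpr ⟨Ne.symm hji, mem_univ i⟩⟩)
    rw [h1, h2]
    have hexp : ∑ j ∈ univ.erase i,
        eval (α i) (Lagrange.nodal ((univ.erase i).erase j) α) * (v i - v j)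
        = Tii i * v i - ∑ j ∈ univ.erase i,
            v j * eval (α i) (Lagrange.nodal ((univ.erase i).erase j) α) := by
      rw [hT]
      simp only [mul_sub]
      rw [Finset.sum_sub_distrib, ← Finset.sum_mul]
      congr 1
      exact sum_congr rfl fun j _ => mul_comm _ _
    have hveq : ∑ j ∈ univ.erase i,
        v j * eval (α i) (Lagrange.nodal ((univ.erase i).erase j) α) = Tii i * v i := by
      have := hv' i
      rw [hexp] at this
      exact (sub_eq_zero.mp this).symm
    rw [hveq]
    ring
  -- the interpolation polynomial and the Wronskian-type polynomial g
  set p : ℂ[X] := Lagrange.interpolate univ α v with hp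
  have hpd : p.degree < (n : WithBot ℕ) := by
    have := Lagrange.degree_interpolate_lt (r := v) hinj
    rwa [hcard] at this
  have hpe : ∀ i, eval (α i) p = v i := fun i =>
    Lagrange.eval_interpolate_at_node v hinj (mem_univ i)
  set g : ℂ[X] := p * derivative f - derivative p * f with hg
  have hge : ∀ i, eval (α i) g = v i * d i := by
    intro i
    rw [hg, eval_sub, eval_mul, eval_mul, hfz i, hf'c i, hpe i, mul_zero, sub_zero]
  have hg' : derivative g = p * derivative (derivative f) - derivative (derivative p) * f := by
    rw [hg, derivative_sub, derivative_mul, derivative_mul]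
    ring
  have hg'e : ∀ i, eval (α i) (derivative g) = v i * (2 * Tii i) := by
    intro i
    rw [hg', eval_sub, eval_mul, eval_mul, hfz i, hf'' i, hpe i, mul_zero, sub_zero]
  -- division by f
  set q : ℂ[X] := g /ₘ f with hq
  set w : ℂ[X] := g %ₘ f with hw
  have hgq : w + f * q = g := modByMonic_add_div g f
  have hwdeg : w.degree < (n : WithBot ℕ) := by
    rw [← hfd]
    exact degree_modByMonic_lt g hf
  have hweval : ∀ i, eval (α i) w = v i * d i := by
    intro i
    have h := congrArg (eval (α i)) hgq
    rw [eval_add, eval_mul, hfz i, zero_mul, add_zero, hge i] at h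
    exact h
  have hwW : w = W := by
    refine Polynomial.eq_of_degrees_lt_of_eval_index_eq univ hinj ?_ ?_ ?_
    · rw [hcard]; exact_mod_cast hwdeg
    · rw [hcard]; exact_mod_cast hWdeg
    · intro i _
      rw [hweval i, hWeval i]
  -- q vanishes at all nodes
  have hqe : ∀ i, eval (α i) q = 0 := by
    intro i
    have hdg := congrArg derivative hgq
    rw [derivative_add, derivative_mul] at hdg
    have h := congrArg (eval (α i)) hdg
    rw [eval_add, eval_add, eval_mul, eval_mul, hfz i, hf'c i, zero_mul, add_zero,
      hg'e i, hwW, hW' i] at h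
    have h2 : d i * eval (α i) q = 0 := by linear_combination h
    exact (mul_eq_zero.mp h2).resolve_left (hd0 i)
  -- degree bookkeeping
  have hpnd : p.natDegree < n := by
    rcases eq_or_ne p 0 with h | h
    · rw [h, natDegree_zero]; exact hn
    · exact (natDegree_lt_iff_degree_lt h).mpr (by exact_mod_cast hpd)
  have hf'nd : (derivative f).natDegree ≤ n - 1 := by
    have := natDegree_derivative_le f
    omega
  have hp'nd : (derivative p).natDegree ≤ n - 2 := by
    have := natDegree_derivative_le p
    omega
  have hgnd : g.natDegree ≤ 2 * n - 2 := by
    rw [hg]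
    refine le_trans (natDegree_sub_le _ _) ?_
    rw [max_le_iff]
    constructor
    · refine le_trans natDegree_mul_le ?_
      omega
    · rcases Nat.eq_zero_or_pos p.natDegree with h0 | h1
      · obtain ⟨c, hc⟩ := Polynomial.natDegree_eq_zero.mp h0
        rw [← hc, derivative_C, zero_mul, natDegree_zero]
        omega
      · refine le_trans natDegree_mul_le ?_
        omega
  have hq0 : q = 0 := by
    refine Polynomial.eq_zero_of_degree_lt_of_eval_index_eq_zero univ hinj ?_
      (fun i _ => hqe i)
    rw [hcard]
    have hqnd : q.natDegree ≤ n - 2 := by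
      rw [hq, natDegree_divByMonic g hf, hfnd]
      omega
    calc q.degree ≤ (q.natDegree : WithBot ℕ) := degree_le_natDegree
      _ < (n : WithBot ℕ) := by exact_mod_cast (by omega : q.natDegree < n)
  have hgdeg : g.degree < (n : WithBot ℕ) := by
    rw [← hgq, hq0, mul_zero, add_zero, hwW]
    exact hWdeg
  -- conclude p is constant
  have hm : p.natDegree = 0 := by
    by_contra hm0
    have hm1 : 1 ≤ p.natDegree := Nat.pos_of_ne_zero hm0
    have hpne : p ≠ 0 := fun h => hm0 (by rw [h, natDegree_zero])
    set m := p.natDegree with hmm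
    have hcoef : g.coeff (m + (n - 1)) = 0 := by
      apply coeff_eq_zero_of_degree_lt
      refine lt_of_lt_of_le hgdeg ?_
      exact_mod_cast (by omega : n ≤ m + (n - 1))
    have hfc : (derivative f).coeff (n - 1) = (n : ℂ) := by
      rw [coeff_derivative, (by omega : n - 1 + 1 = n), ← hfnd, hf.coeff_natDegree, one_mul,
        hfnd, Nat.cast_sub hn]
      ring
    have e1 : (p * derivative f).coeff (m + (n - 1)) = p.coeff m * (n : ℂ) := by
      rw [coeff_mul_add_eq_of_natDegree_le le_rfl hf'nd, hfc]
    have e2 : (derivative p * f).coeff (m + (n - 1)) = p.coeff m * (m : ℂ) := by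
      rw [(by omega : m + (n - 1) = (m - 1) + n),
        coeff_mul_add_eq_of_natDegree_le (le_trans (natDegree_derivative_le p) (by omega))
          (le_of_eq hfnd),
        ← hfnd, hf.coeff_natDegree, mul_one, coeff_derivative,
        (by omega : m - 1 + 1 = m), Nat.cast_sub hm1]
      ring
    have hz : p.coeff m * ((n : ℂ) - m) = 0 := by
      have h := hcoef
      rw [hg, coeff_sub, e1, e2] at h
      linear_combination h
    rcases mul_eq_zero.mp hz with h | h
    · exact hpne (leadingCoeff_eq_zero.mp h)
    · have : (n : ℂ) = (m : ℂ) := by linear_combination h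
      have : n = m := Nat.cast_injective this
      omega
  obtain ⟨c, hc⟩ := Polynomial.natDegree_eq_zero.mp hm
  exact ⟨c, fun i => by rw [← hpe i, ← hc, eval_C]⟩

theorem stmt2 (n : ℕ) (hn : 0 < n) (α : Fin n → ℂ) (hα : Function.Injective α) :
    (Matrix.of fun i j : Fin n =>
      if i = j then ∑ j' ∈ univ \ {i}, ∏ k ∈ univ \ {i, j'}, (α i - α k)
      else -∏ k ∈ univ \ {i, j}, (α i - α k)).rank = n - 1 := by
  classical
  set M : Matrix (Fin n) (Fin n) ℂ := Matrix.of fun i j : Fin n =>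
      if i = j then ∑ j' ∈ univ \ {i}, ∏ k ∈ univ \ {i, j'}, (α i - α k)
      else -∏ k ∈ univ \ {i, j}, (α i - α k) with hM
  have hrow : ∀ (v : Fin n → ℂ) (i : Fin n), M.mulVec v i
      = ∑ j ∈ univ.erase i, (∏ k ∈ univ \ {i, j}, (α i - α k)) * (v i - v j) := by
    intro v i
    have : M.mulVec v i = ∑ j ∈ univ, M i j * v j := rfl
    rw [this, ← Finset.add_sum_erase _ _ (mem_univ i)]
    have hdiag : M i i = ∑ j' ∈ univ \ {i}, ∏ k ∈ univ \ {i, j'}, (α i - α k) := by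
      rw [hM, Matrix.of_apply, if_pos rfl]
    have hoff : ∀ j ∈ univ.erase i, M i j * v j
        = -((∏ k ∈ univ \ {i, j}, (α i - α k)) * v j) := by
      intro j hj
      rw [hM, Matrix.of_apply, if_neg (Ne.symm (mem_erase.mp hj).1), neg_mul]
    rw [hdiag, Finset.sum_congr rfl hoff, Finset.sum_neg_distrib]
    rw [Finset.sdiff_singleton_eq_erase]
    simp only [mul_sub]
    rw [Finset.sum_sub_distrib, ← Finset.sum_mul]
    ring
  have hones : M.mulVec (fun _ => (1 : ℂ)) = 0 := by
    funext i
    rw [hrow]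
    simp
  have hker : LinearMap.ker M.mulVecLin
      = Submodule.span ℂ {(fun _ => (1 : ℂ) : Fin n → ℂ)} := by
    apply le_antisymm
    · intro v hvk
      rw [LinearMap.mem_ker, Matrix.mulVecLin_apply] at hvk
      obtain ⟨c, hc⟩ := kernel_const hn α hα v (fun i => by
        have := congrFun hvk i
        rwa [hrow] at this)
      have hvc : v = c • (fun _ : Fin n => (1 : ℂ)) := funext fun i => by simp [hc i]
      rw [hvc]
      exact Submodule.smul_mem _ _ (Submodule.mem_span_singleton_self _)
    · rw [Submodule.span_singleton_le_iff_mem, LinearMap.mem_ker, Matrix.mulVecLin_apply]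
      exact hones
  have hrn := LinearMap.finrank_range_add_finrank_ker M.mulVecLin
  rw [hker, finrank_span_singleton
      (fun h => one_ne_zero (congrFun h ⟨0, hn⟩))] at hrn
  have hfr : Module.finrank ℂ (Fin n → ℂ) = n := by simp
  rw [hfr] at hrn
  have hrank : M.rank = Module.finrank ℂ (LinearMap.range M.mulVecLin) := rfl
  omega
end

section
/- Let α₁, …, αₙ be distinct complex numbers, T the n × n matrix with T_{ij} = -∏_{k ≠ i, k ≠ j}(α_i - α_k) for i ≠ j and T_{ii} = ∑_{j ≠ i} ∏_{k ≠ i, k ≠ j}(α_i - α_k), and Dₙ the determinant of the (n−1) × (n−1) matrix obtained from T by deleting the n-th row and n-th column. Then Dₙ = (-1)^{C(n-1,2)} · (n-1)! · ∏_{1 ≤ i < j < n}(α_i - α_j)². -/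
open Finset Polynomial Matrix

section AuxLagrange

variable {F : Type*} [Field F] {ι : Type*} [DecidableEq ι]

lemma my_basis_eq (s : Finset ι) (v : ι → F) (i : ι) :
    Lagrange.basis s v i
      = C (∏ j ∈ s.erase i, (v i - v j)⁻¹) * Lagrange.nodal (s.erase i) v := by
  rw [Lagrange.basis, Lagrange.nodal, map_prod, ← prod_mul_distrib]
  exact prod_congr rfl fun j _ => rfl

lemma my_eval_deriv_basis_self (s : Finset ι) (v : ι → F) (hvs : Set.InjOn v s)
    {i : ι} (hi : i ∈ s) :
    eval (v i) (derivative (Lagrange.basis s v i))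
      = ∑ l ∈ s.erase i, (v i - v l)⁻¹ := by
  rw [my_basis_eq, derivative_C_mul, Lagrange.derivative_nodal, eval_mul, eval_C,
    eval_finset_sum, mul_sum]
  refine sum_congr rfl fun m hm => ?_
  have hmi : m ≠ i := ne_of_mem_erase hm
  rw [Lagrange.eval_nodal]
  rw [← Finset.mul_prod_erase _ _ hm, mul_assoc]
  have : ∏ l ∈ (s.erase i).erase m, ((v i - v l)⁻¹ * (v i - v l)) = 1 := by
    refine prod_eq_one fun l hl => ?_
    have hls := mem_of_mem_erase (mem_of_mem_erase hl)
    have hli : l ≠ i := ne_of_mem_erase (mem_of_mem_erase hl)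
    exact inv_mul_cancel₀ (sub_ne_zero.mpr fun h => hli (hvs hi hls h).symm)
  rw [← prod_mul_distrib, this, mul_one]

lemma my_eval_deriv_basis_ne (s : Finset ι) (v : ι → F) {i m : ι}
    (hi : i ∈ s) (hm : m ∈ s) (hmi : m ≠ i) :
    eval (v m) (derivative (Lagrange.basis s v i))
      = (∏ l ∈ s.erase i, (v i - v l)⁻¹) * ∏ l ∈ (s.erase i).erase m, (v m - v l) := by
  rw [my_basis_eq, derivative_C_mul, Lagrange.derivative_nodal, eval_mul, eval_C,
    eval_finset_sum]
  congr 1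
  rw [Finset.sum_eq_single_of_mem m (mem_erase.mpr ⟨hmi, hm⟩)]
  · rw [Lagrange.eval_nodal]
  · intro b hb hbm
    rw [Lagrange.eval_nodal]
    refine prod_eq_zero (mem_erase.mpr ⟨Ne.symm hbm, mem_erase.mpr ⟨hmi, hm⟩⟩) ?_
    · exact sub_self (v m)

lemma my_exactness (s : Finset ι) (v : ι → F) (hvs : Set.InjOn v s)
    (p : F[X]) (hp : p.degree < #s) (x : F) :
    eval x (derivative p)
      = ∑ j ∈ s, eval (v j) p * eval x (derivative (Lagrange.basis s v j)) := by
  conv_lhs => rw [Lagrange.eq_interpolate hvs hp, Lagrange.interpolate_apply]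
  rw [derivative_sum, eval_finset_sum]
  exact sum_congr rfl fun j _ => by rw [derivative_C_mul, eval_mul, eval_C]

end AuxLagrange

lemma my_alg (c h S : ℂ) (K : ℕ) (hc : c ≠ 0) (hh : h ≠ 0) :
    (c * h) * (c⁻¹ + S) * ((h * (c * h))⁻¹ * c ^ K) + h⁻¹ * ((K : ℂ) * c ^ (K - 1) - c ^ K * S)
      = (c * h)⁻¹ * (((K : ℂ) + 1) * c ^ K) := by
  have hch : c * h ≠ 0 := mul_ne_zero hc hh
  have hhch : h * (c * h) ≠ 0 := mul_ne_zero hh hch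
  cases K with
  | zero =>
    simp only [pow_zero, Nat.cast_zero, Nat.zero_sub, zero_mul, mul_one, zero_sub, zero_add]
    field_simp
    ring
  | succ m =>
    simp only [Nat.succ_sub_one, Nat.cast_succ]
    rw [pow_succ c m]
    field_simp
    ring

/-- Here the number of roots is `n + 1` (the paper's `n`), so the paper's `n - 1` is `n`. -/
theorem stmt3 (n : ℕ) (α : Fin (n + 1) → ℂ) (hα : Function.Injective α)
    (T : Matrix (Fin (n + 1)) (Fin (n + 1)) ℂ)
    (hT : ∀ i j, T i j =
      if i = j then ∑ j' ∈ univ \ {i}, ∏ k ∈ univ \ {i, j'}, (α i - α k)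
      else -∏ k ∈ univ \ {i, j}, (α i - α k)) :
    (T.submatrix Fin.castSucc Fin.castSucc).det =
      (-1 : ℂ) ^ (Nat.choose n 2) * (Nat.factorial n : ℂ) *
        ∏ i : Fin n, ∏ j ∈ univ.filter (fun j => i < j),
          (α i.castSucc - α j.castSucc) ^ 2 := by
  classical
  set a : Fin n → ℂ := fun i => α i.castSucc with ha_def
  set β : ℂ := α (Fin.last n) with hβ_def
  have hainj : ∀ {i j : Fin n}, a i = a j → i = j :=
    fun h => Fin.castSucc_injective n (hα h)
  have hane : ∀ {i j : Fin n}, i ≠ j → a i - a j ≠ 0 :=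
    fun hij => sub_ne_zero.mpr fun h => hij (hainj h)
  have haβ : ∀ i : Fin n, a i - β ≠ 0 :=
    fun i => sub_ne_zero.mpr fun h => (Fin.castSucc_lt_last i).ne (hα h)
  set hp : Fin n → ℂ := fun i => ∏ l ∈ univ.erase i, (a i - a l) with hp_def
  have hpne : ∀ i, hp i ≠ 0 :=
    fun i => prod_ne_zero_iff.mpr fun l hl => hane (ne_of_mem_erase hl).symm
  set fp : Fin n → ℂ := fun i => (a i - β) * hp i with fp_def
  have fpne : ∀ i, fp i ≠ 0 := fun i => mul_ne_zero (haβ i) (hpne i)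
  -- splitting `Fin (n+1)` products over `univ.erase (castSucc j)`
  have huniv : ∀ j : Fin n, (univ : Finset (Fin (n + 1))).erase j.castSucc
      = insert (Fin.last n) ((univ.erase j).image Fin.castSucc) := by
    intro j; ext m
    simp only [mem_erase, mem_univ, and_true, mem_insert, mem_image]
    constructor
    · intro hm
      rcases Fin.eq_castSucc_or_eq_last m with ⟨l, rfl⟩ | rfl
      · exact Or.inr ⟨l, fun h => hm (by rw [h]), rfl⟩
      · exact Or.inl rfl
    · rintro (rfl | ⟨l, hl, rfl⟩)
      · exact (Fin.castSucc_lt_last j).ne'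
      · exact fun h => hl (Fin.castSucc_injective n h)
  have hlastnot : ∀ s : Finset (Fin n), Fin.last n ∉ s.image Fin.castSucc := by
    intro s h
    obtain ⟨l, _, hl⟩ := mem_image.mp h
    exact (Fin.castSucc_lt_last l).ne hl
  have hcsinj : ∀ s : Finset (Fin n), Set.InjOn Fin.castSucc (s : Set (Fin n)) :=
    fun s x _ y _ h => Fin.castSucc_injective n h
  have Fp_eq : ∀ j : Fin n,
      ∏ m ∈ (univ : Finset (Fin (n + 1))).erase j.castSucc, (α j.castSucc - α m) = fp j := by
    intro j
    rw [huniv j, prod_insert (hlastnot _), prod_image (hcsinj _)]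
  have Sig_eq : ∀ i : Fin n,
      ∑ m ∈ (univ : Finset (Fin (n + 1))).erase i.castSucc, (α i.castSucc - α m)⁻¹
        = (a i - β)⁻¹ + ∑ l ∈ univ.erase i, (a i - a l)⁻¹ := by
    intro i
    rw [huniv i, sum_insert (hlastnot _), sum_image (hcsinj _)]
  have key_prod : ∀ x y : Fin (n + 1), x ≠ y →
      ∏ m ∈ univ \ {x, y}, (α x - α m)
        = (∏ m ∈ univ.erase x, (α x - α m)) * (α x - α y)⁻¹ := by
    intro x y hxy
    have h1 : (univ : Finset (Fin (n + 1))) \ {x, y} = (univ.erase x).erase y := by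
      ext m
      simp only [mem_sdiff, mem_insert, mem_singleton, mem_erase, mem_univ, and_true, true_and]
      tauto
    rw [h1, eq_mul_inv_iff_mul_eq₀ (sub_ne_zero.mpr fun h => hxy (hα h))]
    exact prod_erase_mul _ _ (mem_erase.mpr ⟨hxy.symm, mem_univ y⟩)
  -- T entries in closed form
  have hTdiag : ∀ i : Fin n, T i.castSucc i.castSucc
      = fp i * ((a i - β)⁻¹ + ∑ l ∈ univ.erase i, (a i - a l)⁻¹) := by
    intro i
    rw [hT, if_pos rfl, ← Sig_eq i, ← Finset.erase_eq, mul_sum]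
    refine sum_congr rfl fun j' hj' => ?_
    rw [key_prod _ _ (ne_of_mem_erase hj').symm, Fp_eq]
  have hToff : ∀ i j : Fin n, j ≠ i →
      T j.castSucc i.castSucc = -(fp j * (a j - a i)⁻¹) := by
    intro i j hji
    have : j.castSucc ≠ i.castSucc := fun h => hji (Fin.castSucc_injective n h)
    rw [hT, if_neg this, key_prod _ _ this, Fp_eq]
  -- the core identity: each entry of Mᵀ * U equals the corresponding entry of V
  have core : ∀ i k : Fin n,
      (∑ j : Fin n, T j.castSucc i.castSucc * ((hp j * fp j)⁻¹ * (a j - β) ^ (k : ℕ)))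
        = (fp i)⁻¹ * ((((k : ℕ) : ℂ) + 1) * (a i - β) ^ (k : ℕ)) := by
    intro i k
    have hinj : Set.InjOn a (univ : Finset (Fin n)) := fun x _ y _ h => hainj h
    have hdeg : ((X - C β) ^ (k : ℕ) : ℂ[X]).degree < #(univ : Finset (Fin n)) := by
      rw [degree_pow, degree_X_sub_C, nsmul_eq_mul, mul_one, card_univ, Fintype.card_fin]
      exact_mod_cast k.isLt
    have hex := my_exactness univ a hinj ((X - C β) ^ (k : ℕ)) hdeg (a i)
    simp only [derivative_X_sub_C_pow, eval_mul, eval_natCast, eval_C, eval_pow, eval_sub,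
      eval_X] at hex
    rw [← Finset.add_sum_erase _ _ (mem_univ i)] at hex
    rw [my_eval_deriv_basis_self univ a hinj (mem_univ i)] at hex
    have hsum2 : ∑ j ∈ univ.erase i,
        (a j - β) ^ (k : ℕ) * eval (a i) (derivative (Lagrange.basis univ a j))
        = hp i * ∑ j ∈ univ.erase i,
            (a j - β) ^ (k : ℕ) * ((hp j)⁻¹ * (a i - a j)⁻¹) := by
      rw [mul_sum]
      refine sum_congr rfl fun j hj => ?_
      have hji : j ≠ i := ne_of_mem_erase hj
      rw [my_eval_deriv_basis_ne univ a (mem_univ j) (mem_univ i) (Ne.symm hji)]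
      have h2 : ∏ l ∈ (univ.erase j).erase i, (a i - a l) = hp i * (a i - a j)⁻¹ := by
        rw [Finset.erase_right_comm,
          eq_mul_inv_iff_mul_eq₀ (hane (Ne.symm hji))]
        exact prod_erase_mul _ _ (mem_erase.mpr ⟨hji, mem_univ j⟩)
      have h3 : ∏ l ∈ univ.erase j, (a j - a l)⁻¹ = (hp j)⁻¹ := prod_inv_distrib _
      rw [h2, h3]; ring
    rw [hsum2] at hex
    -- now the goal
    rw [← Finset.add_sum_erase _ _ (mem_univ i), hTdiag i]
    have hsg : ∑ j ∈ univ.erase i,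
        T j.castSucc i.castSucc * ((hp j * fp j)⁻¹ * (a j - β) ^ (k : ℕ))
        = ∑ j ∈ univ.erase i, (a j - β) ^ (k : ℕ) * ((hp j)⁻¹ * (a i - a j)⁻¹) := by
      refine sum_congr rfl fun j hj => ?_
      have hji : j ≠ i := ne_of_mem_erase hj
      rw [hToff i j hji]
      have hinv : (a i - a j)⁻¹ = -(a j - a i)⁻¹ := by rw [neg_inv, neg_sub]
      rw [hinv, mul_inv]
      rw [show -(fp j * (a j - a i)⁻¹) * ((hp j)⁻¹ * (fp j)⁻¹ * (a j - β) ^ (k : ℕ))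
          = (fp j * (fp j)⁻¹) * -((a j - a i)⁻¹ * (hp j)⁻¹ * (a j - β) ^ (k : ℕ)) from by ring,
        mul_inv_cancel₀ (fpne j), one_mul]
      ring
    rw [hsg]
    have hSS : ∑ j ∈ univ.erase i, (a j - β) ^ (k : ℕ) * ((hp j)⁻¹ * (a i - a j)⁻¹)
        = (hp i)⁻¹ * ((((k : ℕ) : ℂ)) * (a i - β) ^ ((k : ℕ) - 1)
            - (a i - β) ^ (k : ℕ) * ∑ l ∈ univ.erase i, (a i - a l)⁻¹) := by
      rw [eq_inv_mul_iff_mul_eq₀ (hpne i)]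
      linear_combination (-1 : ℂ) * hex
    rw [hSS]
    simp only [fp_def]
    exact my_alg (a i - β) (hp i) _ (k : ℕ) (haβ i) (hpne i)
  -- matrices U, V, W and the determinant computation
  set W : Matrix (Fin n) (Fin n) ℂ := vandermonde (fun i => a i - β) with hWdef
  have hWdet : W.det = ∏ i : Fin n, ∏ j ∈ Ioi i, (a j - a i) := by
    rw [hWdef, det_vandermonde]
    exact prod_congr rfl fun i _ => prod_congr rfl fun j _ => by ring
  have hWne : W.det ≠ 0 := by
    rw [hWdet]
    exact prod_ne_zero_iff.mpr fun i _ => prod_ne_zero_iff.mpr fun j hj =>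
      hane (mem_Ioi.mp hj).ne'
  set U : Matrix (Fin n) (Fin n) ℂ := of fun i j => (hp i * fp i)⁻¹ * W i j with hUdef
  set V : Matrix (Fin n) (Fin n) ℂ :=
    of fun i j => (fp i)⁻¹ * ((((j : ℕ) : ℂ) + 1) * W i j) with hVdef
  have hMUV : (T.submatrix Fin.castSucc Fin.castSucc)ᵀ * U = V := by
    ext i j
    rw [Matrix.mul_apply]
    simp only [hUdef, hVdef, Matrix.transpose_apply, Matrix.submatrix_apply, Matrix.of_apply,
      hWdef, vandermonde_apply]
    exact core i j
  have hdetU : U.det = (∏ i, (hp i * fp i)⁻¹) * W.det := det_mul_column _ _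
  have hdetV : V.det
      = (∏ i, (fp i)⁻¹) * ((∏ j : Fin n, (((j : ℕ) : ℂ) + 1)) * W.det) := by
    have h1 : V = of fun i j => (fp i)⁻¹
        * ((of (fun i j => (((j : ℕ) : ℂ) + 1) * W i j) : Matrix (Fin n) (Fin n) ℂ)) i j := rfl
    rw [h1, det_mul_column, det_mul_row]
  have hfact : (∏ j : Fin n, (((j : ℕ) : ℂ) + 1)) = (Nat.factorial n : ℂ) := by
    have h1 : (∏ j : Fin n, (((j : ℕ) : ℂ) + 1))
        = ((∏ j ∈ range n, (j + 1) : ℕ) : ℂ) := by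
      push_cast
      rw [Fin.prod_univ_eq_prod_range (fun j => ((j : ℂ) + 1)) n]
    rw [h1, Finset.prod_range_add_one_eq_factorial]
  have hdet : (T.submatrix Fin.castSucc Fin.castSucc).det * U.det = V.det := by
    rw [← det_transpose (T.submatrix Fin.castSucc Fin.castSucc), ← det_mul, hMUV]
  have hPhp : (∏ i, hp i) ≠ 0 := prod_ne_zero_iff.mpr fun i _ => hpne i
  have hPfp : (∏ i, fp i) ≠ 0 := prod_ne_zero_iff.mpr fun i _ => fpne i
  have hMdet : (T.submatrix Fin.castSucc Fin.castSucc).det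
      = (Nat.factorial n : ℂ) * ∏ i, hp i := by
    rw [hdetU, hdetV, hfact] at hdet
    have e1 : (∏ i, (hp i * fp i)⁻¹) = ((∏ i, hp i) * (∏ i, fp i))⁻¹ := by
      rw [← prod_mul_distrib, prod_inv_distrib]
    have e2 : (∏ i, (fp i)⁻¹) = (∏ i, fp i)⁻¹ := prod_inv_distrib _
    rw [e1, e2] at hdet
    have h0 : ((T.submatrix Fin.castSucc Fin.castSucc).det * ((∏ i, hp i) * (∏ i, fp i))⁻¹)
        * W.det = ((∏ i, fp i)⁻¹ * (Nat.factorial n : ℂ)) * W.det := by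
      linear_combination hdet
    have h1 := mul_right_cancel₀ hWne h0
    field_simp at h1
    exact mul_right_cancel₀ hPfp (by linear_combination (∏ i, fp i) * h1)
  -- convert the right-hand side
  have hfilter : ∀ i : Fin n, univ.filter (fun j => i < j) = Ioi i := by
    intro i; ext j; simp [mem_Ioi]
  have h0 := Finset.prod_prod_Ioi_mul_eq_prod_prod_off_diag (fun x y : Fin n => a y - a x)
  simp only [Finset.compl_singleton] at h0
  have hcard : ∑ i : Fin n, #(Ioi i) = n.choose 2 := by
    simp only [Fin.card_Ioi]
    rw [Fin.sum_univ_eq_sum_range (fun i => n - 1 - i) n,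
      Finset.sum_range_reflect (fun i => i) n, Finset.sum_range_id, Nat.choose_two_right]
  have hsign : (∏ i, hp i)
      = (-1 : ℂ) ^ n.choose 2 * ∏ i : Fin n, ∏ j ∈ Ioi i, (a i - a j) ^ 2 := by
    have h2 : ∀ i : Fin n, ∏ j ∈ Ioi i, ((a i - a j) * (a j - a i))
        = (-1 : ℂ) ^ #(Ioi i) * ∏ j ∈ Ioi i, (a i - a j) ^ 2 := by
      intro i
      rw [← prod_const (b := (-1 : ℂ)), ← prod_mul_distrib]
      exact prod_congr rfl fun j _ => by ring
    calc (∏ i, hp i)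
        = ∏ i : Fin n, ∏ j ∈ Ioi i, ((a i - a j) * (a j - a i)) := by
          refine Eq.trans ?_ h0.symm
          refine prod_congr rfl fun x _ => prod_congr ?_ fun y _ => rfl
          ext y
          simp
      _ = ∏ i : Fin n, ((-1 : ℂ) ^ #(Ioi i) * ∏ j ∈ Ioi i, (a i - a j) ^ 2) :=
          prod_congr rfl fun i _ => h2 i
      _ = (-1 : ℂ) ^ (∑ i : Fin n, #(Ioi i)) * ∏ i : Fin n, ∏ j ∈ Ioi i, (a i - a j) ^ 2 := by
          rw [prod_mul_distrib, prod_pow_eq_pow_sum]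
      _ = (-1 : ℂ) ^ n.choose 2 * ∏ i : Fin n, ∏ j ∈ Ioi i, (a i - a j) ^ 2 := by rw [hcard]
  have hgoal : ∀ i : Fin n, ∏ j ∈ univ.filter (fun j => i < j),
      (α i.castSucc - α j.castSucc) ^ 2 = ∏ j ∈ Ioi i, (a i - a j) ^ 2 := by
    intro i
    rw [hfilter i]
  rw [hMdet]
  rw [prod_congr rfl fun i _ => hgoal i, hsign]
  ring
end

section
/- Let α₁, …, αₙ be distinct complex numbers and T as above. For every index k between 1 and n, the determinant D_k of the matrix obtained from T by deleting the k-th row and k-th column equals (-1)^{C(n-1,2)} · (n-1)! · ∏_{i < j, i ≠ k, j ≠ k}(α_i - α_j)², and in particular D_k ≠ 0. -/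
open Finset Polynomial Matrix

namespace Stmt4Aux

noncomputable def P (n : ℕ) (u : Fin n → ℂ) (t : ℕ) : ℂ := ∑ j, u j ^ t

noncomputable def B (n : ℕ) (u : Fin n → ℂ) : Matrix (Fin n) (Fin n) ℂ :=
  Matrix.of fun i j =>
    if i = j then 1 + ∑ j' ∈ univ.erase i, u i / (u i - u j') else -(u i / (u i - u j))

noncomputable def V (n : ℕ) (u : Fin n → ℂ) : Matrix (Fin n) (Fin n) ℂ :=
  Matrix.of fun i s => u i ^ ((s : ℕ) + 1)

noncomputable def U (n : ℕ) (u : Fin n → ℂ) : Matrix (Fin n) (Fin n) ℂ :=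
  Matrix.of fun s m =>
    if (s : ℕ) = (m : ℕ) then ((n - (m : ℕ) : ℕ) : ℂ)
    else if (s : ℕ) < (m : ℕ) then P n u ((m : ℕ) - (s : ℕ)) else 0

lemma BV_eq_VU (n : ℕ) (u : Fin n → ℂ) (hu : Function.Injective u) :
    B n u * V n u = V n u * U n u := by
  ext i m
  rw [Matrix.mul_apply, Matrix.mul_apply]
  have hm : (m : ℕ) < n := m.isLt
  have hsub : ∀ j : Fin n, j ≠ i → u i - u j ≠ 0 := fun j hj =>
    sub_ne_zero.2 fun h => hj (hu h.symm)
  have hterm : ∀ j ∈ univ.erase i, B n u i j * V n u j m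
      = u i * (∑ t ∈ range ((m : ℕ) + 1), u i ^ t * u j ^ ((m : ℕ) - t))
        - (u i / (u i - u j)) * u i ^ ((m : ℕ) + 1) := by
    intro j hj
    have hji : j ≠ i := Finset.ne_of_mem_erase hj
    have hne := hsub j hji
    have hgeo : (∑ t ∈ range ((m : ℕ) + 1), u i ^ t * u j ^ ((m : ℕ) - t)) * (u i - u j)
        = u i ^ ((m : ℕ) + 1) - u j ^ ((m : ℕ) + 1) := by
      have h0 := geom_sum₂_mul (u i) (u j) ((m : ℕ) + 1)
      simpa using h0
    have hB : B n u i j = -(u i / (u i - u j)) := by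
      simp only [B, Matrix.of_apply, if_neg (fun h : i = j => hji h.symm)]
    have hV : V n u j m = u j ^ ((m : ℕ) + 1) := rfl
    rw [hB, hV]
    field_simp
    linear_combination (-(u i)) * hgeo
  have hA : ∑ j ∈ univ.erase i,
        u i * (∑ t ∈ range ((m : ℕ) + 1), u i ^ t * u j ^ ((m : ℕ) - t))
      = (∑ t ∈ range ((m : ℕ) + 1), u i ^ (t + 1) * P n u ((m : ℕ) - t))
        - (((m : ℕ) + 1 : ℕ) : ℂ) * u i ^ ((m : ℕ) + 1) := by
    calc ∑ j ∈ univ.erase i,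
          u i * (∑ t ∈ range ((m : ℕ) + 1), u i ^ t * u j ^ ((m : ℕ) - t))
        = ∑ j ∈ univ.erase i, ∑ t ∈ range ((m : ℕ) + 1),
            u i ^ (t + 1) * u j ^ ((m : ℕ) - t) := by
          refine Finset.sum_congr rfl fun j _ => ?_
          rw [Finset.mul_sum]
          exact Finset.sum_congr rfl fun t _ => by ring
      _ = ∑ t ∈ range ((m : ℕ) + 1), ∑ j ∈ univ.erase i,
            u i ^ (t + 1) * u j ^ ((m : ℕ) - t) := Finset.sum_comm
      _ = ∑ t ∈ range ((m : ℕ) + 1),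
            (u i ^ (t + 1) * P n u ((m : ℕ) - t) - u i ^ ((m : ℕ) + 1)) := by
          refine Finset.sum_congr rfl fun t ht => ?_
          rw [← Finset.mul_sum, Finset.sum_erase_eq_sub (mem_univ i), mul_sub]
          have h2 : u i ^ (t + 1) * u i ^ ((m : ℕ) - t) = u i ^ ((m : ℕ) + 1) := by
            rw [← pow_add]
            congr 1
            have := mem_range.1 ht
            omega
          rw [h2]
          simp only [P]
      _ = _ := by
          rw [Finset.sum_sub_distrib, Finset.sum_const, Finset.card_range, nsmul_eq_mul]
  have lhs_eq : ∑ j, B n u i j * V n u j m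
      = (∑ t ∈ range ((m : ℕ) + 1), u i ^ (t + 1) * P n u ((m : ℕ) - t))
        - (((m : ℕ) + 1 : ℕ) : ℂ) * u i ^ ((m : ℕ) + 1) + u i ^ ((m : ℕ) + 1) := by
    rw [← Finset.sum_erase_add _ _ (mem_univ i), Finset.sum_congr rfl hterm,
      Finset.sum_sub_distrib, hA, ← Finset.sum_mul]
    have hBii : B n u i i * V n u i m
        = (1 + ∑ j' ∈ univ.erase i, u i / (u i - u j')) * u i ^ ((m : ℕ) + 1) := by
      simp [B, V]
    rw [hBii]
    ring
  have rhs_eq : ∑ s, V n u i s * U n u s m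
      = (∑ t ∈ range (m : ℕ), u i ^ (t + 1) * P n u ((m : ℕ) - t))
        + u i ^ ((m : ℕ) + 1) * ((n - (m : ℕ) : ℕ) : ℂ) := by
    have hfin : ∑ s, V n u i s * U n u s m
        = ∑ t ∈ range n, u i ^ (t + 1) *
            (if t = (m : ℕ) then ((n - (m : ℕ) : ℕ) : ℂ)
             else if t < (m : ℕ) then P n u ((m : ℕ) - t) else 0) :=
      Fin.sum_univ_eq_sum_range (fun t => u i ^ (t + 1) *
        (if t = (m : ℕ) then ((n - (m : ℕ) : ℕ) : ℂ)
         else if t < (m : ℕ) then P n u ((m : ℕ) - t) else 0)) n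
    rw [hfin]
    rw [← Finset.sum_subset (Finset.range_subset_range.2 hm : range ((m : ℕ) + 1) ⊆ range n)]
    · rw [Finset.sum_range_succ, if_pos rfl]
      congr 1
      refine Finset.sum_congr rfl fun t ht => ?_
      have := mem_range.1 ht
      rw [if_neg (by omega), if_pos (by omega)]
    · intro t _ ht
      have := mem_range.not.1 ht
      rw [if_neg (by omega), if_neg (by omega), mul_zero]
  rw [lhs_eq, rhs_eq, Finset.sum_range_succ]
  have hP0 : P n u ((m : ℕ) - (m : ℕ)) = (n : ℂ) := by
    simp [P, Nat.sub_self]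
  rw [hP0, Nat.cast_sub hm.le]
  push_cast
  ring

lemma V_eq (n : ℕ) (u : Fin n → ℂ) : V n u = Matrix.diagonal u * Matrix.vandermonde u := by
  ext i j
  rw [Matrix.diagonal_mul]
  show u i ^ ((j : ℕ) + 1) = u i * u i ^ (j : ℕ)
  ring

lemma detV_ne (n : ℕ) (u : Fin n → ℂ) (hu : Function.Injective u) (hu0 : ∀ i, u i ≠ 0) :
    (V n u).det ≠ 0 := by
  rw [V_eq, Matrix.det_mul, Matrix.det_diagonal, Matrix.det_vandermonde]
  refine mul_ne_zero (Finset.prod_ne_zero_iff.2 fun i _ => hu0 i) ?_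
  refine Finset.prod_ne_zero_iff.2 fun i _ => Finset.prod_ne_zero_iff.2 fun j hj => ?_
  have hji : j ≠ i := ne_of_gt (mem_Ioi.1 hj)
  exact sub_ne_zero.2 fun h => hji (hu h)

lemma prod_add_one (n : ℕ) : ∏ j ∈ range n, (j + 1) = Nat.factorial n := by
  induction n with
  | zero => simp
  | succ n ih => rw [Finset.prod_range_succ, ih, Nat.factorial_succ]; ring

lemma prod_range_sub_eq_factorial (n : ℕ) : ∏ t ∈ range n, (n - t) = Nat.factorial n := by
  rw [← Finset.prod_range_reflect (fun t => n - t) n]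
  rw [Finset.prod_congr rfl (fun j hj => by
    have := mem_range.1 hj
    show n - (n - 1 - j) = j + 1
    omega)]
  exact prod_add_one n

lemma detU (n : ℕ) (u : Fin n → ℂ) : (U n u).det = (Nat.factorial n : ℂ) := by
  have htri : (U n u).BlockTriangular id := by
    intro a b hab
    have h1 : (b : ℕ) < (a : ℕ) := hab
    show (if ((a : ℕ) = (b : ℕ)) then ((n - (b : ℕ) : ℕ) : ℂ)
      else if (a : ℕ) < (b : ℕ) then P n u ((b : ℕ) - (a : ℕ)) else 0) = 0
    rw [if_neg (by omega), if_neg (by omega)]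
  rw [Matrix.det_of_upperTriangular htri]
  have hdiag : ∀ m : Fin n, U n u m m = ((n - (m : ℕ) : ℕ) : ℂ) := by
    intro m
    show (if ((m : ℕ) = (m : ℕ)) then ((n - (m : ℕ) : ℕ) : ℂ)
      else if (m : ℕ) < (m : ℕ) then P n u ((m : ℕ) - (m : ℕ)) else 0) = _
    rw [if_pos rfl]
  rw [Finset.prod_congr rfl fun m _ => hdiag m]
  rw [Fin.prod_univ_eq_prod_range (fun t => ((n - t : ℕ) : ℂ)) n, ← Nat.cast_prod,
    prod_range_sub_eq_factorial]

lemma detB (n : ℕ) (u : Fin n → ℂ) (hu : Function.Injective u) (hu0 : ∀ i, u i ≠ 0) :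
    (B n u).det = (Nat.factorial n : ℂ) := by
  have h := congrArg Matrix.det (BV_eq_VU n u hu)
  rw [Matrix.det_mul, Matrix.det_mul, detU] at h
  exact mul_right_cancel₀ (detV_ne n u hu hu0) (h.trans (mul_comm _ _))


lemma prod_erase_eq (n : ℕ) (u : Fin n → ℂ) :
    ∏ i, ∏ j ∈ univ.erase i, (u i - u j)
      = (-1 : ℂ) ^ (n.choose 2) * ∏ i, ∏ j ∈ univ.filter (fun j => i < j), (u i - u j) ^ 2 := by
  have hsplit : ∀ i : Fin n, univ.erase i
      = (univ.filter (fun j => j < i)) ∪ (univ.filter (fun j => i < j)) := by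
    intro i; ext j
    simp only [mem_erase, mem_union, mem_filter, mem_univ, true_and, and_true]
    constructor
    · intro h; exact h.lt_or_gt
    · rintro (h | h)
      · exact ne_of_lt h
      · exact ne_of_gt h
  have hdisj : ∀ i : Fin n, Disjoint (univ.filter (fun j => j < i))
      (univ.filter (fun j => i < j)) := by
    intro i
    rw [Finset.disjoint_left]
    intro j h1 h2
    exact lt_asymm (mem_filter.1 h1).2 (mem_filter.1 h2).2
  have hswap : (∏ i, ∏ j ∈ univ.filter (fun j => j < i), (u i - u j))
      = ∏ i, ∏ j ∈ univ.filter (fun j => i < j), (u j - u i) :=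
    Finset.prod_comm' (fun x y => by simp)
  have hcard : ∀ i : Fin n, (univ.filter (fun j => i < j)).card = n - 1 - (i : ℕ) := by
    intro i
    have h : univ.filter (fun j => i < j) = Ioi i := by ext j; simp [mem_Ioi]
    rw [h, Fin.card_Ioi]
  have hneg : ∀ i : Fin n, ∏ j ∈ univ.filter (fun j => i < j), (u j - u i)
      = (-1 : ℂ) ^ (n - 1 - (i : ℕ)) * ∏ j ∈ univ.filter (fun j => i < j), (u i - u j) := by
    intro i
    rw [← hcard i, ← Finset.prod_const, ← Finset.prod_mul_distrib]
    exact Finset.prod_congr rfl fun j _ => by ring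
  have hsum : ∑ i : Fin n, (n - 1 - (i : ℕ)) = n.choose 2 := by
    rw [Fin.sum_univ_eq_sum_range (fun t => n - 1 - t) n,
      Finset.sum_range_reflect (fun t => t) n, Nat.choose_two_right,
      ← Finset.sum_range_id_mul_two n, Nat.mul_div_cancel _ (by norm_num : 0 < 2)]
  calc ∏ i, ∏ j ∈ univ.erase i, (u i - u j)
      = ∏ i, ((∏ j ∈ univ.filter (fun j => j < i), (u i - u j))
          * ∏ j ∈ univ.filter (fun j => i < j), (u i - u j)) := by
        refine Finset.prod_congr rfl fun i _ => ?_
        rw [hsplit i, Finset.prod_union (hdisj i)]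
    _ = (∏ i, ∏ j ∈ univ.filter (fun j => j < i), (u i - u j))
          * ∏ i, ∏ j ∈ univ.filter (fun j => i < j), (u i - u j) := Finset.prod_mul_distrib
    _ = ((-1 : ℂ) ^ ∑ i : Fin n, (n - 1 - (i : ℕ)))
          * ∏ i, ∏ j ∈ univ.filter (fun j => i < j), (u i - u j) ^ 2 := by
        rw [hswap, Finset.prod_congr rfl fun i _ => hneg i, Finset.prod_mul_distrib,
          Finset.prod_pow_eq_pow_sum, mul_assoc, ← Finset.prod_mul_distrib]
        congr 1
        refine Finset.prod_congr rfl fun i _ => ?_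
        rw [← Finset.prod_mul_distrib]
        exact Finset.prod_congr rfl fun j _ => by ring
    _ = _ := by rw [hsum]

section Glue

variable {n : ℕ} (α : Fin (n + 1) → ℂ) (k : Fin (n + 1))

noncomputable def uu : Fin n → ℂ := fun i => α (k.succAbove i) - α k

lemma uu_inj (hα : Function.Injective α) : Function.Injective (uu α k) := by
  intro a b hab
  have h2 : α (k.succAbove a) = α (k.succAbove b) := by
    have : α (k.succAbove a) - α k = α (k.succAbove b) - α k := hab
    linear_combination this
  exact Fin.succAbove_right_injective (hα h2)

lemma uu_ne (hα : Function.Injective α) : ∀ i, uu α k i ≠ 0 := by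
  intro i h
  have h2 : α (k.succAbove i) = α k := by
    have : α (k.succAbove i) - α k = 0 := h
    linear_combination this
  exact Fin.succAbove_ne k i (hα h2)

lemma uu_sub_ne (hα : Function.Injective α) {i j : Fin n} (hji : j ≠ i) :
    uu α k i - uu α k j ≠ 0 := by
  intro h
  have h2 : α (k.succAbove i) = α (k.succAbove j) := by
    have : (α (k.succAbove i) - α k) - (α (k.succAbove j) - α k) = 0 := h
    linear_combination this
  exact hji (Fin.succAbove_right_injective (hα h2)).symm

lemma compl_image (s : Finset (Fin n)) :
    (univ : Finset (Fin (n + 1))) \ s.image k.succAbove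
      = insert k ((univ \ s).image k.succAbove) := by
  ext x
  simp only [mem_sdiff, mem_univ, true_and, mem_insert, mem_image]
  constructor
  · intro hx
    by_cases hxk : x = k
    · exact Or.inl hxk
    · obtain ⟨j, hj⟩ := Fin.exists_succAbove_eq hxk
      refine Or.inr ⟨j, ?_, hj⟩
      intro hjs
      exact hx ⟨j, hjs, hj⟩
  · rintro (rfl | ⟨j, hjs, rfl⟩)
    · rintro ⟨j, -, hj⟩
      exact Fin.succAbove_ne _ j hj
    · rintro ⟨j', hj's, hj'⟩
      exact hjs ((Fin.succAbove_right_injective hj') ▸ hj's)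

lemma k_not_mem_image (s : Finset (Fin n)) : k ∉ s.image k.succAbove := by
  intro h
  obtain ⟨j, -, hj⟩ := mem_image.1 h
  exact Fin.succAbove_ne k j hj

lemma keyA (i j : Fin n) :
    ∏ m ∈ univ \ {k.succAbove i, k.succAbove j}, (α (k.succAbove i) - α m)
      = uu α k i * ∏ m ∈ univ \ ({i, j} : Finset (Fin n)), (uu α k i - uu α k m) := by
  have h1 : ({k.succAbove i, k.succAbove j} : Finset (Fin (n + 1)))
      = ({i, j} : Finset (Fin n)).image k.succAbove := by
    rw [Finset.image_insert, Finset.image_singleton]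
  rw [h1, compl_image, Finset.prod_insert (k_not_mem_image _ _),
    Finset.prod_image (fun a _ b _ h => Fin.succAbove_right_injective h)]
  refine congrArg₂ (· * ·) rfl (Finset.prod_congr rfl fun m _ => ?_)
  show α (k.succAbove i) - α (k.succAbove m)
      = (α (k.succAbove i) - α k) - (α (k.succAbove m) - α k)
  ring

lemma keyB (i : Fin n) :
    (univ : Finset (Fin (n + 1))) \ {k.succAbove i, k} = (univ.erase i).image k.succAbove := by
  ext x
  simp only [mem_sdiff, mem_univ, true_and, mem_insert, mem_singleton, mem_image, mem_erase,
    not_or]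
  constructor
  · rintro ⟨hxσ, hxk⟩
    obtain ⟨j, hj⟩ := Fin.exists_succAbove_eq hxk
    refine ⟨j, ⟨?_, trivial⟩, hj⟩
    rintro rfl
    exact hxσ hj.symm
  · rintro ⟨j, ⟨hji, -⟩, rfl⟩
    exact ⟨fun h => hji (Fin.succAbove_right_injective h), Fin.succAbove_ne k j⟩

lemma keyB' (i : Fin n) :
    ∏ m ∈ univ \ {k.succAbove i, k}, (α (k.succAbove i) - α m)
      = ∏ j ∈ univ.erase i, (uu α k i - uu α k j) := by
  rw [keyB, Finset.prod_image (fun a _ b _ h => Fin.succAbove_right_injective h)]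
  refine Finset.prod_congr rfl fun m _ => ?_
  show α (k.succAbove i) - α (k.succAbove m)
      = (α (k.succAbove i) - α k) - (α (k.succAbove m) - α k)
  ring

lemma keyE (hα : Function.Injective α) (i j : Fin n) (hji : j ≠ i) :
    uu α k i * ∏ m ∈ univ \ ({i, j} : Finset (Fin n)), (uu α k i - uu α k m)
      = (∏ m ∈ univ.erase i, (uu α k i - uu α k m))
          * (uu α k i / (uu α k i - uu α k j)) := by
  have hd : (univ \ ({i, j} : Finset (Fin n))) = (univ.erase i).erase j := by
    ext m
    simp only [mem_sdiff, mem_univ, true_and, mem_insert, mem_singleton, mem_erase, not_or,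
      and_true]
    tauto
  have hmem : j ∈ univ.erase i := mem_erase.2 ⟨hji, mem_univ j⟩
  have hg : ∏ m ∈ univ.erase i, (uu α k i - uu α k m)
      = (uu α k i - uu α k j) * ∏ m ∈ (univ.erase i).erase j, (uu α k i - uu α k m) :=
    (Finset.mul_prod_erase _ _ hmem).symm
  have hne := uu_sub_ne α k hα hji
  rw [hd, hg]
  field_simp

end Glue

end Stmt4Aux

open Stmt4Aux

/-- Here the number of roots is `n + 1` (the paper's `n`), so the paper's `n - 1` is `n`.
Deleting the `k`-th row and column is realized via `Fin.succAbove k`. -/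
theorem stmt4 (n : ℕ) (α : Fin (n + 1) → ℂ) (hα : Function.Injective α)
    (T : Matrix (Fin (n + 1)) (Fin (n + 1)) ℂ)
    (hT : ∀ i j, T i j =
      if i = j then ∑ j' ∈ univ \ {i}, ∏ k ∈ univ \ {i, j'}, (α i - α k)
      else -∏ k ∈ univ \ {i, j}, (α i - α k))
    (k : Fin (n + 1)) :
    (T.submatrix k.succAbove k.succAbove).det =
      (-1 : ℂ) ^ (Nat.choose n 2) * (Nat.factorial n : ℂ) *
        ∏ i : Fin n, ∏ j ∈ univ.filter (fun j => i < j),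
          (α (k.succAbove i) - α (k.succAbove j)) ^ 2 ∧
    (T.submatrix k.succAbove k.succAbove).det ≠ 0 := by
  classical
  set u : Fin n → ℂ := uu α k with hu_def
  have hsub_eq : T.submatrix k.succAbove k.succAbove
      = Matrix.diagonal (fun i => ∏ j ∈ univ.erase i, (u i - u j)) * B n u := by
    ext i j
    rw [Matrix.submatrix_apply, Matrix.diagonal_mul,
      hT (k.succAbove i) (k.succAbove j)]
    by_cases hij : i = j
    · subst hij
      rw [if_pos rfl]
      have h1 : (univ : Finset (Fin (n + 1))) \ {k.succAbove i}
          = insert k ((univ.erase i).image k.succAbove) := by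
        rw [show ({k.succAbove i} : Finset (Fin (n + 1)))
            = ({i} : Finset (Fin n)).image k.succAbove from (Finset.image_singleton _ _).symm,
          compl_image, Finset.sdiff_singleton_eq_erase]
      rw [h1, Finset.sum_insert (k_not_mem_image k _),
        Finset.sum_image (fun a _ b _ h => Fin.succAbove_right_injective h)]
      have hterm : ∀ j' ∈ univ.erase i,
          ∏ m ∈ univ \ {k.succAbove i, k.succAbove j'}, (α (k.succAbove i) - α m)
            = (∏ m ∈ univ.erase i, (u i - u m)) * (u i / (u i - u j')) := fun j' hj' =>
        (keyA α k i j').trans (keyE α k hα i j' (Finset.ne_of_mem_erase hj'))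
      rw [Finset.sum_congr rfl hterm, ← Finset.mul_sum, keyB' α k i]
      have hB : B n u i i = 1 + ∑ j' ∈ univ.erase i, u i / (u i - u j') := by
        simp [B]
      rw [hB]
      ring
    · rw [if_neg (fun h : k.succAbove i = k.succAbove j =>
        hij (Fin.succAbove_right_injective h))]
      rw [keyA α k i j, keyE α k hα i j (Ne.symm hij)]
      have hB : B n u i j = -(u i / (u i - u j)) := by
        simp [B, hij]
      rw [hB]
      ring
  have hdet : (T.submatrix k.succAbove k.succAbove).det
      = (-1 : ℂ) ^ (Nat.choose n 2) * (Nat.factorial n : ℂ) *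
        ∏ i : Fin n, ∏ j ∈ univ.filter (fun j => i < j),
          (α (k.succAbove i) - α (k.succAbove j)) ^ 2 := by
    rw [hsub_eq, Matrix.det_mul, Matrix.det_diagonal,
      detB n u (uu_inj α k hα) (uu_ne α k hα), prod_erase_eq]
    have hrw : ∏ i : Fin n, ∏ j ∈ univ.filter (fun j => i < j), (u i - u j) ^ 2
        = ∏ i : Fin n, ∏ j ∈ univ.filter (fun j => i < j),
            (α (k.succAbove i) - α (k.succAbove j)) ^ 2 := by
      refine Finset.prod_congr rfl fun i _ => Finset.prod_congr rfl fun j _ => ?_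
      show ((α (k.succAbove i) - α k) - (α (k.succAbove j) - α k)) ^ 2 = _
      ring
    rw [hrw]
    ring
  refine ⟨hdet, ?_⟩
  rw [hdet]
  refine mul_ne_zero (mul_ne_zero (pow_ne_zero _ (by norm_num)) ?_) ?_
  · exact_mod_cast Nat.factorial_ne_zero n
  · refine Finset.prod_ne_zero_iff.2 fun i _ => Finset.prod_ne_zero_iff.2 fun j hj =>
      pow_ne_zero _ ?_
    have hlt : i < j := (mem_filter.1 hj).2
    exact sub_ne_zero.2 fun h =>
      (ne_of_lt hlt) (Fin.succAbove_right_injective (hα h))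
end

section
/- If P(x₁, …, x_r) is a symmetric polynomial over a field of characteristic zero (or an integral domain) which vanishes whenever any two of the variables are set equal, then P is divisible by ∏_{1 ≤ i < j ≤ r}(x_i - x_j)². -/
open Finset

section Aux

variable {R : Type*} [CommRing R] {n : Type*} [DecidableEq n]

lemma aux_dvd_sub_aeval (j : n) (a : MvPolynomial n R) (P : MvPolynomial n R) :
    (MvPolynomial.X j - a) ∣
      P - (MvPolynomial.aeval fun l => if l = j then a else MvPolynomial.X l) P := by
  induction P using MvPolynomial.induction_on with
  | C c => simp
  | add p q hp hq =>
      have : (p + q) - (MvPolynomial.aeval fun l => if l = j then a else MvPolynomial.X l) (p + q)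
          = (p - (MvPolynomial.aeval fun l => if l = j then a else MvPolynomial.X l) p)
            + (q - (MvPolynomial.aeval fun l => if l = j then a else MvPolynomial.X l) q) := by
        rw [map_add]; ring
      rw [this]
      exact dvd_add hp hq
  | mul_X p l hp =>
      have key : p * MvPolynomial.X l -
          (MvPolynomial.aeval fun l => if l = j then a else MvPolynomial.X l) (p * MvPolynomial.X l)
          = (p - (MvPolynomial.aeval fun l => if l = j then a else MvPolynomial.X l) p)
              * MvPolynomial.X l
            + (MvPolynomial.aeval fun l => if l = j then a else MvPolynomial.X l) p
              * (MvPolynomial.X l - (if l = j then a else MvPolynomial.X l)) := by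
        rw [map_mul, MvPolynomial.aeval_X]; ring
      rw [key]
      refine dvd_add (hp.mul_right _) (Dvd.dvd.mul_left ?_ _)
      by_cases h : l = j
      · subst h; simp
      · simp [h]

end Aux

section Aux2

variable {F : Type*} [Field F] {r : ℕ}

lemma aux_dvd_iff {i j : Fin r} (hij : i ≠ j) (Q : MvPolynomial (Fin r) F) :
    (MvPolynomial.X i - MvPolynomial.X j) ∣ Q ↔
      (MvPolynomial.aeval fun l => if l = j then MvPolynomial.X i else MvPolynomial.X l) Q
        = (0 : MvPolynomial (Fin r) F) := by
  constructor
  · rintro ⟨R, rfl⟩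
    rw [map_mul]
    have h0 : (MvPolynomial.aeval fun l => if l = j then MvPolynomial.X i else MvPolynomial.X l)
        (MvPolynomial.X i - MvPolynomial.X j : MvPolynomial (Fin r) F)
        = (0 : MvPolynomial (Fin r) F) := by
      simp [hij]
    rw [h0, zero_mul]
  · intro h
    have := aux_dvd_sub_aeval (R := F) j (MvPolynomial.X i) Q
    rw [h, sub_zero] at this
    have : -(MvPolynomial.X j - MvPolynomial.X i) ∣ Q := (neg_dvd).2 this
    simpa [neg_sub] using this

lemma aux_sub_ne_zero {i j : Fin r} (hij : i ≠ j) :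
    (MvPolynomial.X i - MvPolynomial.X j : MvPolynomial (Fin r) F) ≠ 0 := by
  intro h
  have := congrArg (MvPolynomial.eval fun l => if l = i then (1 : F) else 0) h
  simp [hij.symm] at this

lemma aux_prime {i j : Fin r} (hij : i ≠ j) :
    Prime (MvPolynomial.X i - MvPolynomial.X j : MvPolynomial (Fin r) F) := by
  refine ⟨aux_sub_ne_zero hij, ?_, ?_⟩
  · intro hu
    have := hu.map (MvPolynomial.eval (fun _ => (0 : F)))
    simp at this
  · intro a b hab
    rw [aux_dvd_iff hij] at hab
    rw [aux_dvd_iff hij (Q := a), aux_dvd_iff hij (Q := b)]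
    rw [map_mul] at hab
    exact mul_eq_zero.mp hab

lemma aux_not_assoc {i j k l : Fin r} (hij : i < j) (hkl : k < l)
    (hne : (i, j) ≠ (k, l)) :
    ¬ Associated (MvPolynomial.X i - MvPolynomial.X j : MvPolynomial (Fin r) F)
      (MvPolynomial.X k - MvPolynomial.X l) := by
  intro h
  have hdvd : (MvPolynomial.X k - MvPolynomial.X l : MvPolynomial (Fin r) F) ∣
      (MvPolynomial.X i - MvPolynomial.X j) := h.symm.dvd
  rw [aux_dvd_iff hkl.ne] at hdvd
  rw [map_sub, MvPolynomial.aeval_X, MvPolynomial.aeval_X, sub_eq_zero] at hdvd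
  by_cases hi : i = l
  · by_cases hj : j = l
    · exact hij.ne (hi.trans hj.symm)
    · simp only [hi, if_pos rfl, if_neg hj] at hdvd
      have hkj : k = j := MvPolynomial.X_injective hdvd
      have hji : j < i := by rwa [hkj, ← hi] at hkl
      exact lt_asymm hij hji
  · by_cases hj : j = l
    · simp only [if_neg hi, hj, if_pos rfl] at hdvd
      have : i = k := MvPolynomial.X_injective hdvd
      exact hne (by rw [this, hj])
    · simp only [if_neg hi, if_neg hj] at hdvd
      exact hij.ne (MvPolynomial.X_injective hdvd)

/-- products of pairwise non-associated prime squares divide -/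
lemma aux_prod_dvd {α : Type*} [CommMonoidWithZero α] [IsCancelMulZero α] {ι : Type*}
    (s : Finset ι) (f : ι → α) (hp : ∀ a ∈ s, Prime (f a))
    (hna : ∀ a ∈ s, ∀ b ∈ s, a ≠ b → ¬ Associated (f a) (f b))
    {P : α} (hd : ∀ a ∈ s, f a ^ 2 ∣ P) :
    (∏ a ∈ s, f a ^ 2) ∣ P := by
  classical
  induction s using Finset.induction_on generalizing P with
  | empty => simpa using one_dvd P
  | @insert a s ha ih =>
      have hpa := hp a (mem_insert_self a s)
      obtain ⟨Q, hQ⟩ := hd a (mem_insert_self a s)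
      rw [prod_insert ha, hQ]
      refine mul_dvd_mul_left _ (ih (fun b hb => hp b (mem_insert_of_mem hb))
        (fun b hb c hc hbc => hna b (mem_insert_of_mem hb) c (mem_insert_of_mem hc) hbc)
        (fun b hb => ?_))
      have hbprime := hp b (mem_insert_of_mem hb)
      have hndvd : ¬ f b ∣ f a ^ 2 := by
        intro hdvd
        have : f b ∣ f a := hbprime.dvd_of_dvd_pow hdvd
        have : Associated (f b) (f a) := (hbprime.associated_of_dvd hpa this)
        exact hna a (mem_insert_self a s) b (mem_insert_of_mem hb)
          (fun h => ha (h ▸ hb)) this.symm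
      have : f b ^ 2 ∣ f a ^ 2 * Q := hQ ▸ hd b (mem_insert_of_mem hb)
      exact hbprime.pow_dvd_of_dvd_mul_left 2 hndvd this

end Aux2

theorem stmt5 {F : Type*} [Field F] [CharZero F] (r : ℕ)
    (P : MvPolynomial (Fin r) F) (hsymm : P.IsSymmetric)
    (hvan : ∀ i j : Fin r, i ≠ j →
      (MvPolynomial.aeval fun l => if l = j then MvPolynomial.X i else MvPolynomial.X l) P
        = (0 : MvPolynomial (Fin r) F)) :
    (∏ i : Fin r, ∏ j ∈ univ.filter (fun j => i < j),
      (MvPolynomial.X i - MvPolynomial.X j) ^ 2) ∣ P := by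
  classical
  -- Step 1: for i < j, (X i - X j)^2 ∣ P
  have key : ∀ i j : Fin r, i ≠ j → (MvPolynomial.X i - MvPolynomial.X j) ^ 2 ∣ P := by
    intro i j hij
    obtain ⟨Q, hQ⟩ := (aux_dvd_iff hij P).2 (hvan i j hij)
    -- symmetry: rename (swap i j) P = P
    have hswap := hsymm (Equiv.swap i j)
    rw [hQ, map_mul] at hswap
    have hXswap : MvPolynomial.rename (⇑(Equiv.swap i j))
        (MvPolynomial.X i - MvPolynomial.X j : MvPolynomial (Fin r) F)
        = -(MvPolynomial.X i - MvPolynomial.X j) := by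
      rw [map_sub, MvPolynomial.rename_X, MvPolynomial.rename_X,
        Equiv.swap_apply_left, Equiv.swap_apply_right]
      ring
    rw [hXswap] at hswap
    have hfactor : (MvPolynomial.X i - MvPolynomial.X j : MvPolynomial (Fin r) F) *
        (MvPolynomial.rename (⇑(Equiv.swap i j)) Q + Q) = 0 := by
      linear_combination -hswap
    have hQrename : MvPolynomial.rename (⇑(Equiv.swap i j)) Q + Q = 0 :=
      (mul_eq_zero.mp hfactor).resolve_left (aux_sub_ne_zero hij)
    -- apply the substitution to Q + rename Q
    set s : Fin r → MvPolynomial (Fin r) F :=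
      fun l => if l = j then MvPolynomial.X i else MvPolynomial.X l with hs
    have hcomp : (s ∘ ⇑(Equiv.swap i j)) = s := by
      funext l
      by_cases hl : l = i
      · subst hl; simp [hs, Equiv.swap_apply_left, hij, hij.symm]
      · by_cases hl' : l = j
        · subst hl'; simp [hs, Equiv.swap_apply_right, hij]
        · simp [hs, Equiv.swap_apply_of_ne_of_ne hl hl', hl']
    have haeval := congrArg (MvPolynomial.aeval s) hQrename
    rw [map_add, MvPolynomial.aeval_rename, hcomp, map_zero] at haeval
    have h2 : (2 : MvPolynomial (Fin r) F) * MvPolynomial.aeval s Q = 0 := by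
      linear_combination haeval
    have hQ0 : MvPolynomial.aeval s Q = (0 : MvPolynomial (Fin r) F) := by
      rcases mul_eq_zero.mp h2 with h | h
      · exact absurd h two_ne_zero
      · exact h
    obtain ⟨R, hR⟩ := (aux_dvd_iff hij Q).2 hQ0
    exact ⟨R, by rw [hQ, hR]; ring⟩
  -- Step 2: assemble the product
  rw [← Finset.prod_sigma (Finset.univ : Finset (Fin r))
    (fun i => univ.filter (fun j => i < j))
    (fun p => (MvPolynomial.X p.1 - MvPolynomial.X p.2) ^ 2)]
  refine aux_prod_dvd _ _ ?_ ?_ ?_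
  · rintro ⟨a, b⟩ hab
    rw [Finset.mem_sigma, Finset.mem_filter] at hab
    exact aux_prime hab.2.2.ne
  · rintro ⟨a, b⟩ hab ⟨c, d⟩ hcd hne hassoc
    rw [Finset.mem_sigma, Finset.mem_filter] at hab hcd
    refine aux_not_assoc hab.2.2 hcd.2.2 ?_ hassoc
    intro h
    apply hne
    simp only [Prod.mk.injEq] at h
    exact Sigma.ext h.1 (heq_of_eq h.2)
  · rintro ⟨a, b⟩ hab
    rw [Finset.mem_sigma, Finset.mem_filter] at hab
    exact key a b hab.2.2.ne
end

section
/- Let α₁, …, αₙ be distinct complex numbers and T the Jacobian matrix of (α₁,…,αₙ) ↦ (f'(α₁),…,f'(αₙ)) with f(x) = ∏(x - αₖ). As polynomials in α₁: for i, j > 1 with i ≠ j, T_{ij} has degree ≤ 1 in α₁ ; for i > 1, T_{i1} has degree 0 in α₁; and for j > 1, T_{1j} has degree n - 2 in α₁ with leading coefficient -1, while T_{11} has degree n - 2 in α₁ with leading coefficient n - 1. -/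
open Finset Polynomial Matrix

/-- The entries of `T`, viewed as polynomials in `α₁` (the variable `X`, at index `0`)
with the other `α`'s as constants. -/
theorem stmt16 (n : ℕ) (hn : 0 < n) (α : Fin n → ℂ) (hα : Function.Injective α)
    (A : Fin n → Polynomial ℂ)
    (hA : ∀ k, A k = if k = (⟨0, hn⟩ : Fin n) then X else C (α k))
    (T : Matrix (Fin n) (Fin n) (Polynomial ℂ))
    (hT : ∀ i j, T i j =
      if i = j then ∑ j' ∈ univ \ {i}, ∏ k ∈ univ \ {i, j'}, (A i - A k)
      else -∏ k ∈ univ \ {i, j}, (A i - A k)) :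
    (∀ i j : Fin n, i ≠ ⟨0, hn⟩ → j ≠ ⟨0, hn⟩ → i ≠ j → (T i j).natDegree ≤ 1) ∧
    (∀ i : Fin n, i ≠ ⟨0, hn⟩ → (T i ⟨0, hn⟩).natDegree = 0) ∧
    (∀ j : Fin n, j ≠ ⟨0, hn⟩ →
      (T ⟨0, hn⟩ j).natDegree = n - 2 ∧ (T ⟨0, hn⟩ j).coeff (n - 2) = -1) ∧
    ((T ⟨0, hn⟩ ⟨0, hn⟩).natDegree = n - 2 ∧
      (T ⟨0, hn⟩ ⟨0, hn⟩).coeff (n - 2) = (n : ℂ) - 1) := by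
  set z : Fin n := ⟨0, hn⟩ with hz
  have hAz : A z = X := by rw [hA]; simp
  have hAk : ∀ k, k ≠ z → A k = C (α k) := fun k hk => by rw [hA]; simp [hk]
  -- key: for j' ≠ z, the product ∏_{k ∉ {z,j'}} (A z - A k) is monic of degree n-2
  have key : ∀ j' : Fin n, j' ≠ z →
      (∏ k ∈ univ \ {z, j'}, (A z - A k)) = ∏ k ∈ univ \ {z, j'}, (X - C (α k)) := by
    intro j' hj'
    refine Finset.prod_congr rfl fun k hk => ?_
    simp only [Finset.mem_sdiff, Finset.mem_insert, Finset.mem_singleton] at hk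
    rw [hAz, hAk k (fun h => hk.2 (Or.inl h))]
  have hcard : ∀ j' : Fin n, j' ≠ z → (univ \ ({z, j'} : Finset (Fin n))).card = n - 2 := by
    intro j' hj'
    rw [Finset.card_sdiff_of_subset (Finset.subset_univ _), Finset.card_univ, Fintype.card_fin,
      Finset.card_insert_of_notMem (by simp [Ne.symm hj']), Finset.card_singleton]
  have hmonic : ∀ j' : Fin n, (∏ k ∈ univ \ ({z, j'} : Finset (Fin n)),
      (X - C (α k))).Monic := fun j' =>
    monic_prod_of_monic _ _ fun k _ => monic_X_sub_C _
  have hdeg : ∀ j' : Fin n, j' ≠ z → (∏ k ∈ univ \ ({z, j'} : Finset (Fin n)),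
      (X - C (α k))).natDegree = n - 2 := by
    intro j' hj'
    rw [natDegree_prod_of_monic _ _ fun k _ => monic_X_sub_C _]
    simp [hcard j' hj']
  refine ⟨?_, ?_, ?_, ?_⟩
  · -- i, j ≠ z, i ≠ j
    intro i j hi hj hij
    rw [hT, if_neg hij, natDegree_neg]
    refine (natDegree_prod_le _ _).trans ?_
    calc ∑ k ∈ univ \ {i, j}, (A i - A k).natDegree
        ≤ ∑ k ∈ univ \ {i, j}, (if k = z then 1 else 0) := by
          refine Finset.sum_le_sum fun k hk => ?_
          by_cases h : k = z
          · subst h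
            rw [hAk i hi, hAz, if_pos rfl]
            exact (natDegree_sub_le _ _).trans (by simp)
          · rw [hAk i hi, hAk k h, if_neg h, ← C_sub, natDegree_C]
      _ ≤ 1 := by rw [Finset.sum_ite_eq' _ z]; split <;> simp
  · -- i ≠ z, j = z
    intro i hi
    rw [hT, if_neg hi, natDegree_neg]
    apply Nat.eq_zero_of_le_zero
    refine (natDegree_prod_le _ _).trans (le_of_eq ?_)
    refine Finset.sum_eq_zero fun k hk => ?_
    simp only [Finset.mem_sdiff, Finset.mem_insert, Finset.mem_singleton] at hk
    rw [hAk i hi, hAk k (fun h => hk.2 (Or.inr h)), ← C_sub, natDegree_C]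
  · -- i = z, j ≠ z
    intro j hj
    rw [hT, if_neg (Ne.symm hj), key j hj]
    constructor
    · rw [natDegree_neg, hdeg j hj]
    · rw [coeff_neg, ← hdeg j hj, (hmonic j).coeff_natDegree]
  · -- i = j = z
    rw [hT, if_pos rfl]
    have hsum : (∑ j' ∈ univ \ {z}, ∏ k ∈ univ \ {z, j'}, (A z - A k)) =
        ∑ j' ∈ univ \ {z}, ∏ k ∈ univ \ ({z, j'} : Finset (Fin n)), (X - C (α k)) := by
      refine Finset.sum_congr rfl fun j' hj' => ?_
      simp only [Finset.mem_sdiff, Finset.mem_singleton] at hj'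
      exact key j' hj'.2
    rw [hsum]
    rcases eq_or_lt_of_le (show 1 ≤ n from hn) with h1 | h2
    · -- n = 1 : the sum is empty
      have hempty : (univ \ ({z} : Finset (Fin n))) = ∅ := by
        refine Finset.eq_empty_of_forall_notMem fun x hx => ?_
        simp only [Finset.mem_sdiff, Finset.mem_singleton] at hx
        exact hx.2 (Fin.ext (by have := x.isLt; omega))
      rw [hempty]
      simp [← h1]
    · -- n ≥ 2
      have hn2 : 2 ≤ n := h2
      have hcards : (univ \ ({z} : Finset (Fin n))).card = n - 1 := by
        rw [Finset.card_sdiff_of_subset (Finset.subset_univ _), Finset.card_univ, Fintype.card_fin,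
          Finset.card_singleton]
      have hcoeff : (∑ j' ∈ univ \ {z},
          ∏ k ∈ univ \ ({z, j'} : Finset (Fin n)), (X - C (α k))).coeff (n - 2)
          = ((n - 1 : ℕ) : ℂ) := by
        rw [finset_sum_coeff]
        have : ∀ j' ∈ univ \ ({z} : Finset (Fin n)),
            (∏ k ∈ univ \ ({z, j'} : Finset (Fin n)), (X - C (α k))).coeff (n - 2) = 1 := by
          intro j' hj'
          simp only [Finset.mem_sdiff, Finset.mem_singleton] at hj'
          rw [← hdeg j' hj'.2, (hmonic j').coeff_natDegree]
        rw [Finset.sum_congr rfl this, Finset.sum_const, hcards]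
        simp
      constructor
      · refine le_antisymm ?_ (le_natDegree_of_ne_zero ?_)
        · refine natDegree_sum_le_of_forall_le _ _ fun j' hj' => ?_
          simp only [Finset.mem_sdiff, Finset.mem_singleton] at hj'
          exact le_of_eq (hdeg j' hj'.2)
        · rw [hcoeff]
          have : (n - 1 : ℕ) ≠ 0 := by omega
          exact_mod_cast Nat.cast_ne_zero.mpr this
      · rw [hcoeff, Nat.cast_sub (by omega)]
        simp
end
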